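/- Let L be a finite-dimensional complex Lie algebra, carrying its canonical topology as a finite-dimensional complex vector space, and let X, Y ∈ L. If X lies in the closure of the set {φ Y : φ is a Lie algebra automorphism of L}, then the characteristic polynomial of the endomorphism ad X equals the characteristic polynomial of ad Y. -/

import Mathlib

/-- Part (a) of the lemma on mixed orbits (Section 6.3): if `X` lies in the closure of
the orbit of `Y` under Lie algebra automorphisms of a finite-dimensional complex Lie
algebra (with its canonical topology, i.e. any Hausdorff vector topology), then `ad X`
and `ad Y` have the same characteristic polynomial. -/
theorem stmt_10 {L : Type*} [LieRing L] [LieAlgebra ℂ L] [FiniteDimensional ℂ L]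
    [TopologicalSpace L] [IsTopologicalAddGroup L] [ContinuousSMul ℂ L] [T2Space L]
    (X Y : L) (hXY : X ∈ closure {y : L | ∃ φ : L ≃ₗ⁅ℂ⁆ L, φ Y = y}) :
    (LieAlgebra.ad ℂ L X).charpoly = (LieAlgebra.ad ℂ L Y).charpoly := by
  classical
  let ι := Fin (Module.finrank ℂ L)
  let bb : Module.Basis ι ℂ L := Module.finBasis ℂ L
  -- coefficient functions are continuous
  have hcont : ∀ i : ℕ, Continuous fun x : L => (LieAlgebra.ad ℂ L x).charpoly.coeff i := by
    intro i
    have h1 : Continuous fun x : L => (fun j : ι => bb.repr x j) := by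
      apply continuous_pi
      intro j
      exact LinearMap.continuous_of_finiteDimensional
        ((Finsupp.lapply j : (ι →₀ ℂ) →ₗ[ℂ] ℂ).comp (bb.repr : L →ₗ[ℂ] (ι →₀ ℂ)))
    have h2 := (MvPolynomial.continuous_eval
      (p := ((LinearMap.polyCharpoly (LieAlgebra.ad ℂ L : L →ₗ[ℂ] Module.End ℂ L) bb).coeff i))).comp h1
    have : (fun x : L => MvPolynomial.eval (fun j => bb.repr x j)
        ((LinearMap.polyCharpoly (LieAlgebra.ad ℂ L : L →ₗ[ℂ] Module.End ℂ L) bb).coeff i))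
        = fun x : L => (LieAlgebra.ad ℂ L x).charpoly.coeff i := by
      funext x
      have := LinearMap.polyCharpoly_coeff_eval (LieAlgebra.ad ℂ L : L →ₗ[ℂ] Module.End ℂ L) bb x i
      exact this
    rw [← this]
    exact h2
  -- orbit elements have the same charpoly as Y
  have horb : ∀ φ : L ≃ₗ⁅ℂ⁆ L, (LieAlgebra.ad ℂ L (φ Y)).charpoly
      = (LieAlgebra.ad ℂ L Y).charpoly := by
    intro φ
    have had : LieAlgebra.ad ℂ L (φ Y) = φ.toLinearEquiv.conj (LieAlgebra.ad ℂ L Y) := by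
      ext z
      simp only [LieAlgebra.ad_apply, LinearEquiv.conj_apply, LinearMap.comp_apply,
        LieEquiv.coe_toLieHom, LinearEquiv.coe_coe]
      have : (φ.toLinearEquiv.symm z : L) = φ.symm z := rfl
      rw [this]
      have : (φ.toLinearEquiv ⁅Y, φ.symm z⁆ : L) = φ ⁅Y, φ.symm z⁆ := rfl
      rw [this, LieEquiv.map_lie, LieEquiv.apply_symm_apply]
    rw [had, LinearEquiv.charpoly_conj]
  -- the set where the charpoly equals that of Y is closed
  have hclosed : IsClosed {x : L | (LieAlgebra.ad ℂ L x).charpoly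
      = (LieAlgebra.ad ℂ L Y).charpoly} := by
    have : {x : L | (LieAlgebra.ad ℂ L x).charpoly = (LieAlgebra.ad ℂ L Y).charpoly}
        = ⋂ i : ℕ, {x : L | (LieAlgebra.ad ℂ L x).charpoly.coeff i
            = (LieAlgebra.ad ℂ L Y).charpoly.coeff i} := by
      ext x
      simp only [Set.mem_setOf_eq, Set.mem_iInter]
      constructor
      · intro h i; rw [h]
      · intro h; exact Polynomial.ext h
    rw [this]
    exact isClosed_iInter fun i =>
      isClosed_eq (hcont i) continuous_const
  have : {y : L | ∃ φ : L ≃ₗ⁅ℂ⁆ L, φ Y = y} ⊆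
      {x : L | (LieAlgebra.ad ℂ L x).charpoly = (LieAlgebra.ad ℂ L Y).charpoly} := by
    rintro y ⟨φ, rfl⟩
    exact horb φ
  exact hclosed.closure_subset_iff.mpr this hXY
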